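/- If X is a fan with O(X) ⊆ S(X), then X is smooth. -/

import Mathlib

open Set Filter Topology Metric

namespace FansHomogeneity

/-- `A` is an arc in `X` with endpoints `p` and `q`. -/
def IsArcWith {X : Type*} [TopologicalSpace X] (A : Set X) (p q : X) : Prop :=
  ∃ h : unitInterval ≃ₜ A, (h 0 : X) = p ∧ (h 1 : X) = q

/-- `A` is the (possibly degenerate) arc with endpoints `p` and `q`:
either `p = q` and `A = {p}`, or `A` is an arc from `p` to `q`. -/
def IsArcOrPt {X : Type*} [TopologicalSpace X] (A : Set X) (p q : X) : Prop :=
  (p = q ∧ A = {p}) ∨ IsArcWith A p q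

/-- A subcontinuum of a space: a nonempty compact connected subset. -/
def IsSubcontinuum {X : Type*} [TopologicalSpace X] (A : Set X) : Prop :=
  IsCompact A ∧ IsConnected A

/-- A space is hereditarily unicoherent if the intersection of any two subcontinua
is connected. -/
def HereditarilyUnicoherent (X : Type*) [TopologicalSpace X] : Prop :=
  ∀ A B : Set X, IsSubcontinuum A → IsSubcontinuum B → IsPreconnected (A ∩ B)

/-- A space is arcwise connected if any two distinct points are the endpoints of an arc. -/
def ArcwiseConnected (X : Type*) [TopologicalSpace X] : Prop :=
  ∀ p q : X, p ≠ q → ∃ A : Set X, IsArcWith A p q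

/-- A dendroid: an arcwise connected, hereditarily unicoherent continuum
(nonempty compact connected metric space). -/
def IsDendroid (X : Type*) [MetricSpace X] : Prop :=
  CompactSpace X ∧ ConnectedSpace X ∧ ArcwiseConnected X ∧ HereditarilyUnicoherent X

/-- `p` has order at least `n`: `p` is a common endpoint of `n` arcs in `X` which
pairwise intersect only in `p`. -/
def OrderGe (X : Type*) [TopologicalSpace X] (p : X) (n : ℕ) : Prop :=
  ∃ F : Fin n → Set X, (∀ i, ∃ q : X, IsArcWith (F i) p q) ∧
    ∀ i j, i ≠ j → F i ∩ F j = {p}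

/-- The endpoints of `X`: points of order exactly `1`. -/
def endpoints (X : Type*) [TopologicalSpace X] : Set X :=
  {p | OrderGe X p 1 ∧ ¬ OrderGe X p 2}

/-- The ordinary points of `X`: points of order exactly `2`. -/
def ordinaryPoints (X : Type*) [TopologicalSpace X] : Set X :=
  {p | OrderGe X p 2 ∧ ¬ OrderGe X p 3}

/-- The ramification points of `X`: points of order greater than `2`. -/
def ramificationPoints (X : Type*) [TopologicalSpace X] : Set X :=
  {p | OrderGe X p 3}

/-- A fan with top `t`: a dendroid whose unique ramification point is `t`. -/
def IsFanWithTop (X : Type*) [MetricSpace X] (t : X) : Prop :=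
  IsDendroid X ∧ ramificationPoints X = {t}

/-- A fan: a dendroid with exactly one ramification point. -/
def IsFan (X : Type*) [MetricSpace X] : Prop :=
  ∃ t : X, IsFanWithTop X t

/-- The orbit of a point under the action of the homeomorphism group of `X`. -/
def orbit (X : Type*) [TopologicalSpace X] (x : X) : Set X :=
  {y | ∃ h : X ≃ₜ X, h x = y}

/-- `A` is an orbit of the action of the homeomorphism group of `X` on `X`. -/
def IsOrbit (X : Type*) [TopologicalSpace X] (A : Set X) : Prop :=
  ∃ x : X, A = orbit X x

/-- The set of orbits of the action of the homeomorphism group of `X` on `X`. -/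
def orbits (X : Type*) [TopologicalSpace X] : Set (Set X) :=
  {A | IsOrbit X A}

/-- `X` is `1/n`-homogeneous (has homogeneity degree `n`): the action of the
homeomorphism group of `X` on `X` has exactly `n` orbits. -/
def OneOverHomogeneous (X : Type*) [TopologicalSpace X] (n : ℕ) : Prop :=
  (orbits X).ncard = n

/-- A fan `X` with top `t` is smooth at `t` with respect to `a` if for every sequence
converging to `a` the arcs from `t` converge, in the Hausdorff metric, to the arc `t a`. -/
def SmoothAt (X : Type*) [MetricSpace X] (t a : X) : Prop :=
  ∀ (α : ℕ → X) (A : ℕ → Set X) (B : Set X),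
    Tendsto α atTop (nhds a) → (∀ n, IsArcOrPt (A n) t (α n)) → IsArcOrPt B t a →
    Tendsto (fun n => hausdorffDist (A n) B) atTop (nhds 0)

/-- `S(X)`: the set of points `a` such that `X` is smooth at the top `t` with respect to `a`. -/
def smoothSet (X : Type*) [MetricSpace X] (t : X) : Set X :=
  {a | SmoothAt X t a}

/-- A smooth fan with top `t`. -/
def IsSmoothFanWithTop (X : Type*) [MetricSpace X] (t : X) : Prop :=
  IsFanWithTop X t ∧ smoothSet X t = univ

/-- A smooth fan. -/
def IsSmoothFan (X : Type*) [MetricSpace X] : Prop :=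
  ∃ t : X, IsSmoothFanWithTop X t

/-- The relation on `cantorSet × [0,1]` generating the identification of
`cantorSet × {1}` to a point. -/
def cantorFanRel (a b : ↥cantorSet × unitInterval) : Prop :=
  a.2 = 1 ∧ b.2 = 1

/-- The Cantor fan: the quotient `(C × [0,1]) / (C × {1})` where `C` is the
middle-thirds Cantor set. -/
def CantorFan : Type := Quot cantorFanRel

instance : TopologicalSpace CantorFan :=
  instTopologicalSpaceQuot

/-- The fan `F_ω ⊆ ℝ²`: the union of the segments from `(0,0)` to `(1/i, 1/i²)`, `i ≥ 1`. -/
def Fomega : Set (ℝ × ℝ) :=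
  ⋃ i : ℕ, segment ℝ ((0, 0) : ℝ × ℝ) ((1 / ((i : ℝ) + 1), 1 / ((i : ℝ) + 1) ^ 2) : ℝ × ℝ)

/-- The shrinking Cantor fan `F_{C_ω} ⊆ ℝ²`: for each `i ≥ 1` the union of the segments
from the origin to `(c, 1/2^(i-1))` for `c ∈ C ∩ [(3^(i-1)-1)/3^(i-1), (3^i-2)/3^i]`
(here indexed by `i - 1 ∈ ℕ`). -/
def shrinkingCantorFan : Set (ℝ × ℝ) :=
  ⋃ i : ℕ, ⋃ c ∈ cantorSet ∩
      Icc (((3 : ℝ) ^ i - 1) / 3 ^ i) (((3 : ℝ) ^ (i + 1) - 2) / 3 ^ (i + 1)),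
    segment ℝ ((0, 0) : ℝ × ℝ) ((c, (1 / 2 : ℝ) ^ i) : ℝ × ℝ)

/-- `S` is a simple `n`-od in the plane: the union of `n` straight line segments
which pairwise intersect exactly in a common endpoint. -/
def IsSimpleNod (n : ℕ) (S : Set (ℝ × ℝ)) : Prop :=
  ∃ (o : ℝ × ℝ) (b : Fin n → ℝ × ℝ),
    (∀ i, b i ≠ o) ∧
    S = ⋃ i, segment ℝ o (b i) ∧
    ∀ i j, i ≠ j → segment ℝ o (b i) ∩ segment ℝ o (b j) = {o}

/-- `X` is colocally connected at `p`: every neighborhood of `p` contains a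
neighborhood `V` of `p` such that `X - V` is connected. -/
def ColocallyConnectedAt (X : Type*) [TopologicalSpace X] (p : X) : Prop :=
  ∀ U ∈ nhds p, ∃ V ∈ nhds p, V ⊆ U ∧ IsPreconnected Vᶜ

/-- `X` is homeomorphic to the Lelek fan, i.e. to a smooth fan whose set of
endpoints is dense in it. -/
def HomeoToLelekFan (X : Type*) [TopologicalSpace X] : Prop :=
  ∃ (Y : Type) (m : MetricSpace Y),
    @IsSmoothFan Y m ∧
    @Dense Y (@UniformSpace.toTopologicalSpace Y
        (@PseudoMetricSpace.toUniformSpace Y m.toPseudoMetricSpace))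
      (@endpoints Y (@UniformSpace.toTopologicalSpace Y
        (@PseudoMetricSpace.toUniformSpace Y m.toPseudoMetricSpace))) ∧
    Nonempty (@Homeomorph X Y _ (@UniformSpace.toTopologicalSpace Y
        (@PseudoMetricSpace.toUniformSpace Y m.toPseudoMetricSpace)))

section ArcBasics

variable {X : Type*} [TopologicalSpace X] [T2Space X]

theorem isArcWith_range {f : unitInterval → X} (hc : Continuous f)
    (hi : Function.Injective f) : IsArcWith (range f) (f 0) (f 1) := by
  refine ⟨(hc.isClosedEmbedding hi).isEmbedding.toHomeomorph, rfl, rfl⟩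

theorem IsArcWith.exists_param {A : Set X} {p q : X} (h : IsArcWith A p q) :
    ∃ f : unitInterval → X, Continuous f ∧ Function.Injective f ∧
      range f = A ∧ f 0 = p ∧ f 1 = q := by
  obtain ⟨e, h0, h1⟩ := h
  refine ⟨fun s => (e s : X), continuous_subtype_val.comp e.continuous,
    Subtype.coe_injective.comp e.injective, ?_, h0, h1⟩
  have : (fun s => (e s : X)) = Subtype.val ∘ e := rfl
  rw [this, Set.range_comp, show range (⇑e) = univ from e.surjective.range_eq,
    Set.image_univ, Subtype.range_coe]

theorem IsArcWith.ne {A : Set X} {p q : X} (h : IsArcWith A p q) : p ≠ q := by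
  obtain ⟨f, _, hfi, _, h0, h1⟩ := h.exists_param
  rintro rfl
  have : (0 : unitInterval) = 1 := hfi (h0.trans h1.symm)
  exact zero_ne_one (congrArg Subtype.val this)

theorem IsArcWith.isSubcontinuum {A : Set X} {p q : X} (h : IsArcWith A p q) :
    IsSubcontinuum A := by
  obtain ⟨f, hfc, _, hfr, h0, _⟩ := h.exists_param
  exact ⟨hfr ▸ isCompact_range hfc, ⟨⟨p, hfr ▸ h0 ▸ mem_range_self 0⟩,
    hfr ▸ isPreconnected_range hfc⟩⟩

theorem IsArcWith.mem_left {A : Set X} {p q : X} (h : IsArcWith A p q) : p ∈ A := by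
  obtain ⟨f, _, _, hfr, h0, _⟩ := h.exists_param
  exact hfr ▸ h0 ▸ mem_range_self 0

theorem IsArcWith.mem_right {A : Set X} {p q : X} (h : IsArcWith A p q) : q ∈ A := by
  obtain ⟨f, _, _, hfr, _, h1⟩ := h.exists_param
  exact hfr ▸ h1 ▸ mem_range_self 1

theorem IsArcOrPt.isSubcontinuum {A : Set X} {p q : X} (h : IsArcOrPt A p q) :
    IsSubcontinuum A := by
  rcases h with ⟨rfl, rfl⟩ | h
  · exact ⟨isCompact_singleton, isConnected_singleton⟩
  · exact h.isSubcontinuum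

theorem IsArcOrPt.mem_left {A : Set X} {p q : X} (h : IsArcOrPt A p q) : p ∈ A := by
  rcases h with ⟨rfl, rfl⟩ | h
  · exact rfl
  · exact h.mem_left

theorem IsArcOrPt.mem_right {A : Set X} {p q : X} (h : IsArcOrPt A p q) : q ∈ A := by
  rcases h with ⟨rfl, rfl⟩ | h
  · exact rfl
  · exact h.mem_right

/-- A preconnected subset of an arc containing both endpoints is the whole arc. -/
theorem arc_subset_of_preconnected {A S : Set X} {p q : X} (hA : IsArcWith A p q)
    (hS : S ⊆ A) (hSc : IsPreconnected S) (hp : p ∈ S) (hq : q ∈ S) : A ⊆ S := by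
  obtain ⟨f, hfc, hfi, hfr, hf0, hf1⟩ := hA.exists_param
  have hSsub : S ⊆ range f := hfr ▸ hS
  have hST : f '' (f ⁻¹' S) = S := Set.image_preimage_eq_of_subset hSsub
  have hT : IsPreconnected (f ⁻¹' S) :=
    (hfc.isClosedEmbedding hfi).isEmbedding.isInducing.isPreconnected_image.mp
      (by rw [hST]; exact hSc)
  have h2 : IsPreconnected ((fun s : unitInterval => (s : ℝ)) '' (f ⁻¹' S)) :=
    hT.image _ continuous_subtype_val.continuousOn
  have h0' : (0 : ℝ) ∈ (fun s : unitInterval => (s : ℝ)) '' (f ⁻¹' S) :=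
    ⟨0, by rw [mem_preimage, hf0]; exact hp, rfl⟩
  have h1' : (1 : ℝ) ∈ (fun s : unitInterval => (s : ℝ)) '' (f ⁻¹' S) :=
    ⟨1, by rw [mem_preimage, hf1]; exact hq, rfl⟩
  intro a ha
  rw [← hfr] at ha
  obtain ⟨u, rfl⟩ := ha
  obtain ⟨v, hv, hvu⟩ := h2.Icc_subset h0' h1' u.2
  have : v = u := Subtype.ext hvu
  rw [← hST]
  exact ⟨u, this ▸ hv, rfl⟩

/-- Uniqueness of arcs in a hereditarily unicoherent space. -/
theorem IsArcOrPt.unique (hHU : HereditarilyUnicoherent X)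
    {A B : Set X} {p q : X} (hA : IsArcOrPt A p q) (hB : IsArcOrPt B p q) : A = B := by
  rcases hA with ⟨rfl, rfl⟩ | hA
  · rcases hB with ⟨-, rfl⟩ | hB
    · rfl
    · exact absurd rfl hB.ne
  · rcases hB with ⟨rfl, rfl⟩ | hB
    · exact absurd rfl hA.ne
    · have hpre : IsPreconnected (A ∩ B) := hHU A B hA.isSubcontinuum hB.isSubcontinuum
      have h1 : A ⊆ A ∩ B := arc_subset_of_preconnected hA inter_subset_left hpre
        ⟨hA.mem_left, hB.mem_left⟩ ⟨hA.mem_right, hB.mem_right⟩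
      have h2 : B ⊆ A ∩ B := arc_subset_of_preconnected hB inter_subset_right hpre
        ⟨hA.mem_left, hB.mem_left⟩ ⟨hA.mem_right, hB.mem_right⟩
      exact subset_antisymm (fun x hx => (h1 hx).2) (fun x hx => (h2 hx).1)

end ArcBasics
section MyArc

variable {X : Type*} [TopologicalSpace X] [T2Space X]

open Classical in
/-- A chosen arc (or point) between any two points. -/
noncomputable def myArc (hAC : ArcwiseConnected X) (p q : X) : Set X :=
  if h : p = q then {p} else (hAC p q h).choose

theorem myArc_spec (hAC : ArcwiseConnected X) (p q : X) :
    IsArcOrPt (myArc hAC p q) p q := by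
  classical
  unfold myArc
  split_ifs with h
  · exact Or.inl ⟨h, rfl⟩
  · exact Or.inr (hAC p q h).choose_spec

theorem IsArcOrPt.eq_myArc (hAC : ArcwiseConnected X) (hHU : HereditarilyUnicoherent X)
    {A : Set X} {p q : X} (h : IsArcOrPt A p q) : A = myArc hAC p q :=
  h.unique hHU (myArc_spec hAC p q)

theorem myArc_self (hAC : ArcwiseConnected X) (p : X) : myArc hAC p p = {p} := by
  classical
  unfold myArc; rw [dif_pos rfl]

theorem mem_myArc_left (hAC : ArcwiseConnected X) (p q : X) : p ∈ myArc hAC p q :=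
  (myArc_spec hAC p q).mem_left

theorem mem_myArc_right (hAC : ArcwiseConnected X) (p q : X) : q ∈ myArc hAC p q :=
  (myArc_spec hAC p q).mem_right

/-- Initial segments of arcs are arcs (or points). -/
theorem isArcOrPt_image_Icc_zero {f : unitInterval → X} (hc : Continuous f)
    (hi : Function.Injective f) (u : unitInterval) :
    IsArcOrPt (f '' Icc 0 u) (f 0) (f u) := by
  by_cases hu : u = 0
  · subst hu
    exact Or.inl ⟨rfl, by rw [Set.Icc_self, Set.image_singleton]⟩
  · have hu' : (u : ℝ) ≠ 0 := fun h => hu (Subtype.ext h)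
    have hupos : (0 : ℝ) < u := lt_of_le_of_ne u.2.1 (Ne.symm hu')
    set g : unitInterval → unitInterval := fun s =>
      ⟨(u : ℝ) * s, mul_nonneg u.2.1 s.2.1, mul_le_one₀ u.2.2 s.2.1 s.2.2⟩ with hg
    have hgc : Continuous g :=
      (continuous_const.mul continuous_subtype_val).subtype_mk _
    have hgi : Function.Injective g := by
      intro a b hab
      have : (u : ℝ) * a = (u : ℝ) * b := congrArg Subtype.val hab
      exact Subtype.ext (mul_left_cancel₀ hu' this)
    have hrange : range g = Icc 0 u := by
      ext y
      constructor
      · rintro ⟨s, rfl⟩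
        exact ⟨Subtype.mk_le_mk.mpr (mul_nonneg u.2.1 s.2.1),
          Subtype.mk_le_mk.mpr (by
            calc (u : ℝ) * s ≤ (u : ℝ) * 1 := by
                  exact mul_le_mul_of_nonneg_left s.2.2 u.2.1
              _ = u := mul_one _)⟩
      · rintro ⟨hy0, hyu⟩
        have hy0' : (0 : ℝ) ≤ y := hy0
        have hyu' : (y : ℝ) ≤ u := hyu
        refine ⟨⟨(y : ℝ) / u, div_nonneg hy0' u.2.1, (div_le_one hupos).mpr hyu'⟩, ?_⟩
        exact Subtype.ext (by simp [hg, mul_div_cancel₀ _ hu'])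
    have key := isArcWith_range (hc.comp hgc) (hi.comp hgi)
    have h0 : (f ∘ g) 0 = f 0 := by
      simp only [Function.comp_apply]; congr 1; exact Subtype.ext (mul_zero _)
    have h1 : (f ∘ g) 1 = f u := by
      simp only [Function.comp_apply]; congr 1; exact Subtype.ext (mul_one _)
    have hr : range (f ∘ g) = f '' Icc 0 u := by
      rw [Set.range_comp, hrange]
    rw [h0, h1, hr] at key
    exact Or.inr key

/-- Final segments of arcs are arcs (or points). -/
theorem isArcOrPt_image_Icc_one {f : unitInterval → X} (hc : Continuous f)
    (hi : Function.Injective f) (u : unitInterval) :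
    IsArcOrPt (f '' Icc u 1) (f u) (f 1) := by
  by_cases hu : u = 1
  · subst hu
    exact Or.inl ⟨rfl, by rw [Set.Icc_self, Set.image_singleton]⟩
  · have hu' : (u : ℝ) ≠ 1 := fun h => hu (Subtype.ext h)
    have h1u : (0 : ℝ) < 1 - u := by
      have := lt_of_le_of_ne u.2.2 hu'
      linarith
    set g : unitInterval → unitInterval := fun s =>
      ⟨(u : ℝ) + s * (1 - u), by
        constructor
        · have : (0:ℝ) ≤ (s : ℝ) * (1 - u) := mul_nonneg s.2.1 h1u.le
          have := u.2.1; linarith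
        · have h1 : (s : ℝ) * (1 - u) ≤ 1 * (1 - u) :=
            mul_le_mul_of_nonneg_right s.2.2 h1u.le
          linarith⟩ with hg
    have hgc : Continuous g :=
      (continuous_const.add (continuous_subtype_val.mul continuous_const)).subtype_mk _
    have hgi : Function.Injective g := by
      intro a b hab
      have h2 : (u : ℝ) + a * (1 - u) = (u : ℝ) + b * (1 - u) := congrArg Subtype.val hab
      have : (a : ℝ) = b := by
        have := add_left_cancel h2
        exact mul_right_cancel₀ (ne_of_gt h1u) this
      exact Subtype.ext this
    have hrange : range g = Icc u 1 := by
      ext y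
      constructor
      · rintro ⟨s, rfl⟩
        refine ⟨Subtype.mk_le_mk.mpr ?_, Subtype.mk_le_mk.mpr ?_⟩
        · have : (0:ℝ) ≤ (s : ℝ) * (1 - u) := mul_nonneg s.2.1 h1u.le
          linarith
        · have h1 : (s : ℝ) * (1 - u) ≤ 1 * (1 - u) :=
            mul_le_mul_of_nonneg_right s.2.2 h1u.le
          linarith
      · rintro ⟨hy0, hyu⟩
        have hy0' : (u : ℝ) ≤ y := hy0
        have hyu' : (y : ℝ) ≤ 1 := hyu
        refine ⟨⟨((y : ℝ) - u) / (1 - u), div_nonneg (by linarith) h1u.le,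
          (div_le_one h1u).mpr (by linarith)⟩, ?_⟩
        refine Subtype.ext ?_
        show (u : ℝ) + ((y : ℝ) - u) / (1 - u) * (1 - u) = y
        rw [div_mul_cancel₀ _ (ne_of_gt h1u)]
        ring
    have key := isArcWith_range (hc.comp hgc) (hi.comp hgi)
    have h0 : (f ∘ g) 0 = f u := by
      simp only [Function.comp_apply]; congr 1
      exact Subtype.ext (by show (u:ℝ) + ((0:unitInterval) : ℝ) * (1 - u) = u; simp)
    have h1 : (f ∘ g) 1 = f 1 := by
      simp only [Function.comp_apply]; congr 1
      exact Subtype.ext (by show (u:ℝ) + ((1:unitInterval) : ℝ) * (1 - u) = 1; simp)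
    have hr : range (f ∘ g) = f '' Icc u 1 := by
      rw [Set.range_comp, hrange]
    rw [h0, h1, hr] at key
    exact Or.inr key

theorem IsArcWith.symm {A : Set X} {p q : X} (h : IsArcWith A p q) : IsArcWith A q p := by
  obtain ⟨f, hc, hi, hr, h0, h1⟩ := h.exists_param
  have key := isArcWith_range (hc.comp unitInterval.continuous_symm)
    (hi.comp unitInterval.symm_bijective.injective)
  have hr' : range (f ∘ unitInterval.symm) = A := by
    rw [Set.range_comp, unitInterval.symm_bijective.surjective.range_eq, Set.image_univ, hr]
  have h0' : (f ∘ unitInterval.symm) 0 = q := by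
    simp only [Function.comp_apply, unitInterval.symm_zero]; exact h1
  have h1' : (f ∘ unitInterval.symm) 1 = p := by
    simp only [Function.comp_apply, unitInterval.symm_one]; exact h0
  rwa [hr', h0', h1'] at key

end MyArc
section FanStructure

variable {X : Type*} [TopologicalSpace X] [T2Space X]

theorem myArc_param (hAC : ArcwiseConnected X) {t a : X} (ha : a ≠ t) :
    ∃ f : unitInterval → X, Continuous f ∧ Function.Injective f ∧
      range f = myArc hAC t a ∧ f 0 = t ∧ f 1 = a := by
  rcases myArc_spec hAC t a with ⟨hta, -⟩ | harc
  · exact absurd hta.symm ha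
  · exact harc.exists_param

theorem myArc_initSeg (hAC : ArcwiseConnected X) (hHU : HereditarilyUnicoherent X)
    {f : unitInterval → X} (hc : Continuous f) (hi : Function.Injective f)
    {t : X} (h0 : f 0 = t) (u : unitInterval) :
    myArc hAC t (f u) = f '' Icc 0 u := by
  have := isArcOrPt_image_Icc_zero hc hi u
  rw [h0] at this
  exact (this.eq_myArc hAC hHU).symm

theorem myArc_comparable (hAC : ArcwiseConnected X) (hHU : HereditarilyUnicoherent X)
    {t w u v : X} (hu : u ∈ myArc hAC t w) (hv : v ∈ myArc hAC t w) :
    u ∈ myArc hAC t v ∨ v ∈ myArc hAC t u := by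
  rcases myArc_spec hAC t w with ⟨-, hset⟩ | harc
  · rw [hset] at hu
    exact Or.inl (hu ▸ mem_myArc_left hAC u v)
  · obtain ⟨f, hfc, hfi, hfr, hf0, -⟩ := harc.exists_param
    have hAeq : myArc hAC t w = range f := hfr.symm
    rw [hAeq] at hu hv
    obtain ⟨r, rfl⟩ := hu
    obtain ⟨r', rfl⟩ := hv
    rcases le_total r r' with hle | hle
    · refine Or.inl ?_
      rw [myArc_initSeg hAC hHU hfc hfi hf0 r']
      exact ⟨r, ⟨unitInterval.nonneg', hle⟩, rfl⟩
    · refine Or.inr ?_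
      rw [myArc_initSeg hAC hHU hfc hfi hf0 r]
      exact ⟨r', ⟨unitInterval.nonneg', hle⟩, rfl⟩

theorem myArc_subset (hAC : ArcwiseConnected X) (hHU : HereditarilyUnicoherent X)
    {t u v : X} (hu : u ∈ myArc hAC t v) : myArc hAC t u ⊆ myArc hAC t v := by
  rcases myArc_spec hAC t v with ⟨rfl, hset⟩ | harc
  · rw [hset] at hu ⊢
    rw [hu, myArc_self]
  · obtain ⟨f, hfc, hfi, hfr, hf0, -⟩ := harc.exists_param
    rw [← hfr] at hu
    obtain ⟨r, rfl⟩ := hu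
    rw [myArc_initSeg hAC hHU hfc hfi hf0 r, ← hfr]
    exact (Set.image_subset_range f _).trans (le_refl _)

theorem myArc_antisymm (hAC : ArcwiseConnected X) (hHU : HereditarilyUnicoherent X)
    {t u v : X} (hu : u ∈ myArc hAC t v) (hv : v ∈ myArc hAC t u) : u = v := by
  rcases myArc_spec hAC t v with ⟨rfl, hset⟩ | harc
  · rw [hset] at hu; exact hu
  · obtain ⟨f, hfc, hfi, hfr, hf0, hf1⟩ := harc.exists_param
    rw [← hfr] at hu
    obtain ⟨r, rfl⟩ := hu
    rw [myArc_initSeg hAC hHU hfc hfi hf0 r] at hv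
    rw [← hf1] at hv ⊢
    obtain ⟨s, ⟨-, hs⟩, hfs⟩ := hv
    have hs1 : s = 1 := hfi hfs
    have : r = 1 := le_antisymm unitInterval.le_one' (hs1 ▸ hs)
    rw [this]

theorem Icc_inter_Icc_eq_singleton (ρ : unitInterval) :
    Icc (0 : unitInterval) ρ ∩ Icc ρ 1 = {ρ} := by
  ext z
  constructor
  · rintro ⟨⟨-, h1⟩, ⟨h2, -⟩⟩
    exact le_antisymm h1 h2
  · rintro rfl
    exact ⟨⟨unitInterval.nonneg', le_refl _⟩, ⟨le_refl _, unitInterval.le_one'⟩⟩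

theorem orderGe_two_of {p q0 q1 : X} {F0 F1 : Set X}
    (h0 : IsArcWith F0 p q0) (h1 : IsArcWith F1 p q1)
    (h01 : F0 ∩ F1 = {p}) : OrderGe X p 2 := by
  refine ⟨![F0, F1], ?_, ?_⟩
  · intro i; fin_cases i
    exacts [⟨q0, h0⟩, ⟨q1, h1⟩]
  · intro i j hij
    fin_cases i <;> fin_cases j <;>
      first
        | exact absurd rfl hij
        | simpa using h01
        | simpa [Set.inter_comm] using h01

theorem orderGe_three_of {p q0 q1 q2 : X} {F0 F1 F2 : Set X}
    (h0 : IsArcWith F0 p q0) (h1 : IsArcWith F1 p q1) (h2 : IsArcWith F2 p q2)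
    (h01 : F0 ∩ F1 = {p}) (h02 : F0 ∩ F2 = {p}) (h12 : F1 ∩ F2 = {p}) :
    OrderGe X p 3 := by
  refine ⟨![F0, F1, F2], ?_, ?_⟩
  · intro i; fin_cases i
    exacts [⟨q0, h0⟩, ⟨q1, h1⟩, ⟨q2, h2⟩]
  · intro i j hij
    fin_cases i <;> fin_cases j <;>
      first
        | exact absurd rfl hij
        | simpa using h01
        | simpa using h02
        | simpa using h12
        | simpa [Set.inter_comm] using h01
        | simpa [Set.inter_comm] using h02
        | simpa [Set.inter_comm] using h12

/-- Interior points of arcs emanating from `t` are ordinary points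
(in a space whose only ramification point is `t`). -/
theorem interior_mem_ordinaryPoints {t : X} (hram : ramificationPoints X = {t})
    {f : unitInterval → X} (hc : Continuous f) (hi : Function.Injective f)
    (h0 : f 0 = t) {s : unitInterval} (hs0 : s ≠ 0) (hs1 : s ≠ 1) :
    f s ∈ ordinaryPoints X := by
  have hfs_ne_t : f s ≠ t := by
    rw [← h0]; exact fun hh => hs0 (hi hh)
  constructor
  · -- OrderGe 2
    have harc0 : IsArcWith (f '' Icc 0 s) (f s) t := by
      rcases isArcOrPt_image_Icc_zero hc hi s with ⟨heq, -⟩ | harc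
      · exact absurd (h0 ▸ heq.symm) hfs_ne_t
      · rw [h0] at harc; exact harc.symm
    have harc1 : IsArcWith (f '' Icc s 1) (f s) (f 1) := by
      rcases isArcOrPt_image_Icc_one hc hi s with ⟨heq, -⟩ | harc
      · exact absurd (hi heq) hs1
      · exact harc
    refine orderGe_two_of harc0 harc1 ?_
    rw [← Set.image_inter hi, Icc_inter_Icc_eq_singleton, Set.image_singleton]
  · -- not OrderGe 3
    intro h3
    have : f s ∈ ramificationPoints X := h3
    rw [hram] at this
    exact hfs_ne_t this

theorem initialSegment_of_preconnected {f : unitInterval → X} (hc : Continuous f)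
    (hi : Function.Injective f) {S : Set X} (hS : S ⊆ range f)
    (hSpre : IsPreconnected S) (hScomp : IsCompact S) (h0 : f 0 ∈ S) :
    ∃ ρ : unitInterval, S = f '' Icc 0 ρ := by
  have hST : f '' (f ⁻¹' S) = S := Set.image_preimage_eq_of_subset hS
  have hTpre : IsPreconnected (f ⁻¹' S) :=
    (hc.isClosedEmbedding hi).isEmbedding.isInducing.isPreconnected_image.mp
      (by rw [hST]; exact hSpre)
  have hTcomp : IsCompact (f ⁻¹' S) := (hScomp.isClosed.preimage hc).isCompact
  set T' : Set ℝ := (fun s : unitInterval => (s : ℝ)) '' (f ⁻¹' S) with hT'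
  have hT'comp : IsCompact T' := hTcomp.image continuous_subtype_val
  have hT'pre : IsPreconnected T' := hTpre.image _ continuous_subtype_val.continuousOn
  have h0T : (0 : unitInterval) ∈ f ⁻¹' S := by rw [mem_preimage]; exact h0
  have hT'ne : T'.Nonempty := ⟨0, 0, h0T, rfl⟩
  obtain ⟨ρ₀, hρT, hρval⟩ := hT'comp.sSup_mem hT'ne
  refine ⟨ρ₀, subset_antisymm ?_ ?_⟩
  · intro z hz
    obtain ⟨w, rfl⟩ := hS hz
    have hwT : w ∈ f ⁻¹' S := hz
    have : (w : ℝ) ≤ sSup T' := le_csSup hT'comp.bddAbove ⟨w, hwT, rfl⟩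
    rw [← hρval] at this
    exact ⟨w, ⟨unitInterval.nonneg', Subtype.coe_le_coe.mp this⟩, rfl⟩
  · rintro z ⟨w, ⟨-, hwρ⟩, rfl⟩
    have hmem : (w : ℝ) ∈ T' := by
      apply hT'pre.Icc_subset ⟨0, h0T, rfl⟩ ⟨ρ₀, hρT, hρval⟩
      exact ⟨w.2.1, hρval ▸ Subtype.coe_le_coe.mpr hwρ⟩
    obtain ⟨w', hw'T, hww⟩ := hmem
    have : w' = w := Subtype.ext hww
    rw [← this]
    exact hw'T

/-- The fan trichotomy: any two points are comparable or their arcs to `t` meet only in `t`. -/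
theorem fan_trichotomy (hAC : ArcwiseConnected X) (hHU : HereditarilyUnicoherent X)
    {t : X} (hram : ramificationPoints X = {t}) (x y : X) :
    x ∈ myArc hAC t y ∨ y ∈ myArc hAC t x ∨
      myArc hAC t x ∩ myArc hAC t y = {t} := by
  by_cases hx : x = t
  · exact Or.inl (by rw [hx]; exact mem_myArc_left hAC t y)
  by_cases hy : y = t
  · exact Or.inr (Or.inl (by rw [hy]; exact mem_myArc_left hAC t x))
  obtain ⟨f, hfc, hfi, hfr, hf0, hf1⟩ := myArc_param hAC hx
  obtain ⟨g, hgc, hgi, hgr, hg0, hg1⟩ := myArc_param hAC hy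
  set A := myArc hAC t x with hA
  set B := myArc hAC t y with hB
  have hAsub : IsSubcontinuum A := (myArc_spec hAC t x).isSubcontinuum
  have hBsub : IsSubcontinuum B := (myArc_spec hAC t y).isSubcontinuum
  have hScomp : IsCompact (A ∩ B) := hAsub.1.inter_right hBsub.1.isClosed
  have hSpre : IsPreconnected (A ∩ B) := hHU A B hAsub hBsub
  have htS : t ∈ A ∩ B := ⟨mem_myArc_left hAC t x, mem_myArc_left hAC t y⟩
  -- the intersection is an initial segment of both arcs
  obtain ⟨ρ, hρ⟩ := initialSegment_of_preconnected hfc hfi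
    (show A ∩ B ⊆ range f by rw [hfr]; exact inter_subset_left)
    hSpre hScomp (by rw [hf0]; exact htS)
  obtain ⟨τ, hτ⟩ := initialSegment_of_preconnected hgc hgi
    (show A ∩ B ⊆ range g by rw [hgr]; exact inter_subset_right)
    hSpre hScomp (by rw [hg0]; exact htS)
  have hwS : f ρ ∈ A ∩ B := by
    rw [hρ]; exact ⟨ρ, ⟨unitInterval.nonneg', le_refl _⟩, rfl⟩
  have hw'S : g τ ∈ A ∩ B := by
    rw [hτ]; exact ⟨τ, ⟨unitInterval.nonneg', le_refl _⟩, rfl⟩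
  have hww' : f ρ = g τ := by
    apply myArc_antisymm hAC hHU
    · rw [myArc_initSeg hAC hHU hgc hgi hg0 τ, ← hτ]; exact hwS
    · rw [myArc_initSeg hAC hHU hfc hfi hf0 ρ, ← hρ]; exact hw'S
  set w := f ρ with hwdef
  by_cases hwx : w = x
  · exact Or.inl (hwx ▸ hwS.2)
  by_cases hwy : w = y
  · exact Or.inr (Or.inl (hwy ▸ hwS.1))
  by_cases hwt : w = t
  · refine Or.inr (Or.inr ?_)
    have : A ∩ B = myArc hAC t w := by
      rw [hρ, myArc_initSeg hAC hHU hfc hfi hf0 ρ]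
    rw [this, ← hwt, hwt, myArc_self]
  · -- w is a ramification point: contradiction
    exfalso
    have hρ0 : ρ ≠ 0 := fun hh => hwt (by rw [hwdef, hh, hf0])
    have hρ1 : ρ ≠ 1 := fun hh => hwx (by rw [hwdef, hh, hf1])
    have hτ0 : τ ≠ 0 := fun hh => hwt (hww'.trans (by rw [hh]; exact hg0))
    have hτ1 : τ ≠ 1 := fun hh => hwy (hww'.trans (by rw [hh]; exact hg1))
    have harc0 : IsArcWith (f '' Icc 0 ρ) w t := by
      rcases isArcOrPt_image_Icc_zero hfc hfi ρ with ⟨heq, -⟩ | harc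
      · exact absurd (by rw [hwdef, ← heq, hf0]) hwt
      · rw [hf0] at harc; exact harc.symm
    have harc1 : IsArcWith (f '' Icc ρ 1) w x := by
      rcases isArcOrPt_image_Icc_one hfc hfi ρ with ⟨heq, -⟩ | harc
      · exact absurd (hfi heq) hρ1
      · rw [hf1] at harc; exact harc
    have harc2 : IsArcWith (g '' Icc τ 1) w y := by
      rcases isArcOrPt_image_Icc_one hgc hgi τ with ⟨heq, -⟩ | harc
      · exact absurd (hgi heq) hτ1
      · rw [hg1] at harc; rw [hww']; exact harc
    have h01 : f '' Icc 0 ρ ∩ f '' Icc ρ 1 = {w} := by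
      rw [← Set.image_inter hfi, Icc_inter_Icc_eq_singleton, Set.image_singleton]
    have h02 : f '' Icc 0 ρ ∩ g '' Icc τ 1 = {w} := by
      rw [← hρ, hτ, ← Set.image_inter hgi, Icc_inter_Icc_eq_singleton, Set.image_singleton,
        hww']
    have h12 : f '' Icc ρ 1 ∩ g '' Icc τ 1 = {w} := by
      apply subset_antisymm
      · intro z ⟨hz1, hz2⟩
        have hzA : z ∈ A := by rw [← hfr]; exact Set.image_subset_range f _ hz1
        have hzB : z ∈ B := by rw [← hgr]; exact Set.image_subset_range g _ hz2
        have hzS : z ∈ f '' Icc 0 ρ := by rw [← hρ]; exact ⟨hzA, hzB⟩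
        rw [← h01]; exact ⟨hzS, hz1⟩
      · rintro z rfl
        constructor
        · exact ⟨ρ, ⟨le_refl _, unitInterval.le_one'⟩, rfl⟩
        · rw [hww']; exact ⟨τ, ⟨le_refl _, unitInterval.le_one'⟩, rfl⟩
    have h3 : OrderGe X w 3 := orderGe_three_of harc0 harc1 harc2 h01 h02 h12
    have : w ∈ ramificationPoints X := h3
    rw [hram] at this
    exact hwt this

end FanStructure
section Hyperspace

variable {X : Type*} [MetricSpace X] [CompactSpace X]

theorem all_bounded (s : Set X) : Bornology.IsBounded s :=
  isCompact_univ.isBounded.subset (subset_univ s)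

theorem hEdist_ne_top {s u : Set X} (hs : s.Nonempty) (hu : u.Nonempty) :
    EMetric.hausdorffEdist s u ≠ ⊤ :=
  hausdorffEdist_ne_top_of_nonempty_of_bounded hs hu (all_bounded s) (all_bounded u)

/-- Every sequence of nonempty compact subsets of a compact metric space has a
subsequence converging in the Hausdorff metric. -/
theorem exists_subseq_hausdorff (K : ℕ → TopologicalSpace.NonemptyCompacts X) :
    ∃ (L : TopologicalSpace.NonemptyCompacts X) (φ : ℕ → ℕ), StrictMono φ ∧
      Tendsto (fun j => hausdorffDist (K (φ j) : Set X) (L : Set X)) atTop (nhds 0) := by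
  obtain ⟨L, φ, hφ, hconv⟩ := CompactSpace.tendsto_subseq K
  refine ⟨L, φ, hφ, ?_⟩
  have h2 := tendsto_iff_dist_tendsto_zero.mp hconv
  simpa [Function.comp, Metric.NonemptyCompacts.dist_eq] using h2

/-- Selection of approximating points from Hausdorff-converging sets. -/
theorem tendsto_nearest {A : ℕ → Set X} {L : Set X} (hA : ∀ n, IsCompact (A n))
    (hAne : ∀ n, (A n).Nonempty) (hL : L.Nonempty)
    (hconv : Tendsto (fun n => hausdorffDist (A n) L) atTop (nhds 0))
    {x : X} (hx : x ∈ L) :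
    ∃ c : ℕ → X, (∀ n, c n ∈ A n) ∧ Tendsto c atTop (nhds x) := by
  have hsel : ∀ n, ∃ y ∈ A n, infDist x (A n) = dist x y := fun n =>
    (hA n).exists_infDist_eq_dist (hAne n) x
  choose c hc hcd using hsel
  refine ⟨c, hc, ?_⟩
  rw [tendsto_iff_dist_tendsto_zero]
  have hbd : ∀ n, dist (c n) x ≤ hausdorffDist (A n) L := by
    intro n
    rw [dist_comm, ← hcd n]
    rw [hausdorffDist_comm]
    exact infDist_le_hausdorffDist_of_mem hx (hEdist_ne_top hL (hAne n))
  exact squeeze_zero (fun n => dist_nonneg) hbd hconv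

/-- Limits of points of Hausdorff-converging sets lie in the limit set. -/
theorem mem_limit_of_tendsto {A : ℕ → Set X} {L : Set X} (hLc : IsClosed L)
    (hLne : L.Nonempty) (hAne : ∀ n, (A n).Nonempty)
    (hconv : Tendsto (fun n => hausdorffDist (A n) L) atTop (nhds 0))
    {c : ℕ → X} (hc : ∀ n, c n ∈ A n) {x : X} (hx : Tendsto c atTop (nhds x)) :
    x ∈ L := by
  rw [hLc.mem_iff_infDist_zero hLne]
  have key : ∀ n, infDist x L ≤ dist x (c n) + hausdorffDist (A n) L := by
    intro n
    calc infDist x L ≤ infDist (c n) L + dist x (c n) := infDist_le_infDist_add_dist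
      _ ≤ hausdorffDist (A n) L + dist x (c n) := by
          have := infDist_le_hausdorffDist_of_mem (hc n) (hEdist_ne_top (hAne n) hLne)
          linarith
      _ = dist x (c n) + hausdorffDist (A n) L := by ring
  have hlim : Tendsto (fun n => dist x (c n) + hausdorffDist (A n) L) atTop (nhds 0) := by
    have h1 : Tendsto (fun n => dist x (c n)) atTop (nhds 0) := by
      have := tendsto_iff_dist_tendsto_zero.mp hx
      simpa [dist_comm] using this
    simpa using h1.add hconv
  exact le_antisymm (ge_of_tendsto' hlim key) infDist_nonneg

/-- The Hausdorff limit of preconnected sets is preconnected. -/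
theorem isPreconnected_limit {A : ℕ → Set X} {L : Set X}
    (hA : ∀ n, IsPreconnected (A n)) (hAcomp : ∀ n, IsCompact (A n))
    (hAne : ∀ n, (A n).Nonempty) (hLcomp : IsCompact L) (hLne : L.Nonempty)
    (hconv : Tendsto (fun n => hausdorffDist (A n) L) atTop (nhds 0)) :
    IsPreconnected L := by
  by_contra hnc
  rw [IsPreconnected] at hnc
  push_neg at hnc
  obtain ⟨U, V, hU, hV, hcover, ⟨u, huL, huU⟩, ⟨v, hvL, hvV⟩, hempty⟩ := hnc
  set F : Set X := L \ V with hF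
  set G : Set X := L \ U with hG
  have hFcomp : IsCompact F := hLcomp.diff hV
  have hGcomp : IsCompact G := hLcomp.diff hU
  have hdisj : ∀ p ∈ F, ∀ q ∈ G, p ≠ q := by
    rintro p ⟨hpL, hpV⟩ q ⟨hqL, hqU⟩ rfl
    rcases hcover hpL with hp | hp
    · exact hqU hp
    · exact hpV hp
  have huF : u ∈ F := ⟨huL, fun huV => by
    rw [Set.eq_empty_iff_forall_notMem] at hempty
    exact hempty u ⟨huL, huU, huV⟩⟩
  have hvG : v ∈ G := ⟨hvL, fun hvU => by
    rw [Set.eq_empty_iff_forall_notMem] at hempty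
    exact hempty v ⟨hvL, hvU, hvV⟩⟩
  have hFne : F.Nonempty := ⟨u, huF⟩
  have hGne : G.Nonempty := ⟨v, hvG⟩
  have hLFG : L ⊆ F ∪ G := by
    intro z hz
    rcases hcover hz with hzU | hzV
    · left
      refine ⟨hz, fun hzV => ?_⟩
      rw [Set.eq_empty_iff_forall_notMem] at hempty
      exact hempty z ⟨hz, hzU, hzV⟩
    · right
      refine ⟨hz, fun hzU => ?_⟩
      rw [Set.eq_empty_iff_forall_notMem] at hempty
      exact hempty z ⟨hz, hzU, hzV⟩
  -- positive distance between F and G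
  obtain ⟨p₀, hp₀F, hp₀min⟩ := hFcomp.exists_isMinOn hFne
    (continuous_infDist_pt (G : Set X)).continuousOn
  set δ : ℝ := infDist p₀ G with hδ
  have hδpos : 0 < δ := by
    rw [hδ, ← (hGcomp.isClosed.notMem_iff_infDist_pos hGne)]
    exact fun hmem => hdisj p₀ hp₀F p₀ hmem rfl
  have hδle : ∀ p ∈ F, ∀ q ∈ G, δ ≤ dist p q := by
    intro p hp q hq
    calc δ ≤ infDist p G := hp₀min hp
      _ ≤ dist p q := infDist_le_dist_of_mem hq
  -- the two open sets
  set U' : Set X := {y | infDist y F < δ / 3} with hU'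
  set V' : Set X := {y | infDist y G < δ / 3} with hV'
  have hU'open : IsOpen U' := isOpen_lt (continuous_infDist_pt _) continuous_const
  have hV'open : IsOpen V' := isOpen_lt (continuous_infDist_pt _) continuous_const
  have hdisj' : U' ∩ V' = ∅ := by
    rw [Set.eq_empty_iff_forall_notMem]
    rintro y ⟨hyU, hyV⟩
    obtain ⟨p, hpF, hpd⟩ := hFcomp.exists_infDist_eq_dist hFne y
    obtain ⟨q, hqG, hqd⟩ := hGcomp.exists_infDist_eq_dist hGne y
    have h1 : dist y p < δ / 3 := by rw [← hpd]; exact hyU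
    have h2 : dist y q < δ / 3 := by rw [← hqd]; exact hyV
    have h3 : δ ≤ dist p q := hδle p hpF q hqG
    have h4 : dist p q ≤ dist p y + dist y q := dist_triangle p y q
    rw [dist_comm p y] at h4
    linarith
  -- pick n with hausdorffDist (A n) L small
  have hev : ∀ᶠ n in atTop, hausdorffDist (A n) L < δ / 3 := by
    have := hconv.eventually (eventually_lt_nhds (show (0:ℝ) < δ / 3 by linarith))
    exact this
  obtain ⟨n, hn⟩ := hev.exists
  -- A n is covered by U' and V' and meets both
  have hsub : A n ⊆ U' ∪ V' := by
    intro z hz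
    obtain ⟨w, hwL, hwd⟩ := hLcomp.exists_infDist_eq_dist hLne z
    have h1 : dist z w < δ / 3 := by
      rw [← hwd]
      exact lt_of_le_of_lt (infDist_le_hausdorffDist_of_mem hz
        (hEdist_ne_top (hAne n) hLne)) hn
    rcases hLFG hwL with hwF | hwG
    · left
      exact lt_of_le_of_lt (le_trans (infDist_le_dist_of_mem hwF) (le_of_eq rfl)) h1
    · right
      exact lt_of_le_of_lt (le_trans (infDist_le_dist_of_mem hwG) (le_of_eq rfl)) h1
  have hmeetU : (A n ∩ U').Nonempty := by
    obtain ⟨z, hzA, hzd⟩ := (hAcomp n).exists_infDist_eq_dist (hAne n) u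
    refine ⟨z, hzA, ?_⟩
    have h1 : dist u z < δ / 3 := by
      rw [← hzd]
      refine lt_of_le_of_lt ?_ hn
      rw [hausdorffDist_comm]
      exact infDist_le_hausdorffDist_of_mem (huF.1) (hEdist_ne_top hLne (hAne n))
    have : infDist z F ≤ dist z u := infDist_le_dist_of_mem huF
    rw [dist_comm] at h1
    exact lt_of_le_of_lt this h1
  have hmeetV : (A n ∩ V').Nonempty := by
    obtain ⟨z, hzA, hzd⟩ := (hAcomp n).exists_infDist_eq_dist (hAne n) v
    refine ⟨z, hzA, ?_⟩
    have h1 : dist v z < δ / 3 := by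
      rw [← hzd]
      refine lt_of_le_of_lt ?_ hn
      rw [hausdorffDist_comm]
      exact infDist_le_hausdorffDist_of_mem (hvG.1) (hEdist_ne_top hLne (hAne n))
    have : infDist z G ≤ dist z v := infDist_le_dist_of_mem hvG
    rw [dist_comm] at h1
    exact lt_of_le_of_lt this h1
  obtain ⟨z, hzA, hzU, hzV⟩ := hA n U' V' hU'open hV'open hsub hmeetU hmeetV
  rw [Set.eq_empty_iff_forall_notMem] at hdisj'
  exact hdisj' z ⟨hzU, hzV⟩

theorem exists_subseq_or {P Q : ℕ → Prop} (h : ∀ n, P n ∨ Q n) :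
    (∃ φ : ℕ → ℕ, StrictMono φ ∧ ∀ n, P (φ n)) ∨
      (∃ φ : ℕ → ℕ, StrictMono φ ∧ ∀ n, Q (φ n)) := by
  by_cases hP : ∃ᶠ n in atTop, P n
  · exact Or.inl (extraction_of_frequently_atTop hP)
  · refine Or.inr (extraction_of_frequently_atTop ?_)
    rw [not_frequently] at hP
    exact (hP.mono (fun n hn => (h n).resolve_left hn)).frequently

end Hyperspace
section MainLemmas

variable {X : Type*} [MetricSpace X]

/-- The midpoint of the unit interval. -/
noncomputable def halfI : unitInterval := ⟨1/2, by norm_num⟩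

theorem halfI_ne_zero : halfI ≠ 0 := by
  intro hh
  have := congrArg Subtype.val hh
  norm_num [halfI] at this

theorem halfI_ne_one : halfI ≠ 1 := by
  intro hh
  have := congrArg Subtype.val hh
  norm_num [halfI] at this

theorem arc_subset_subcontinuum (hAC : ArcwiseConnected X)
    (hHU : HereditarilyUnicoherent X) {t a : X} {L : Set X}
    (hL : IsSubcontinuum L) (ht : t ∈ L) (ha : a ∈ L) : myArc hAC t a ⊆ L := by
  rcases myArc_spec hAC t a with ⟨rfl, hset⟩ | harc
  · rw [hset]
    exact Set.singleton_subset_iff.mpr ht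
  · have hpre := hHU L (myArc hAC t a) hL harc.isSubcontinuum
    have key := arc_subset_of_preconnected harc inter_subset_right hpre
      ⟨ht, harc.mem_left⟩ ⟨ha, harc.mem_right⟩
    exact fun z hz => (key hz).1

/-- In a hereditarily unicoherent space, points in a limit of arcs from a smooth
point's approximations lie on the limiting arc. -/
theorem limit_in_arc [CompactSpace X] (hAC : ArcwiseConnected X)
    (hHU : HereditarilyUnicoherent X) {t p : X} (hs : SmoothAt X t p)
    {pk qk : ℕ → X} (hpk : Tendsto pk atTop (nhds p))
    (hqk : ∀ k, qk k ∈ myArc hAC t (pk k)) {q : X} (hq : Tendsto qk atTop (nhds q)) :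
    q ∈ myArc hAC t p := by
  have hconv := hs pk (fun k => myArc hAC t (pk k)) (myArc hAC t p) hpk
    (fun k => myArc_spec hAC t (pk k)) (myArc_spec hAC t p)
  have hsub := (myArc_spec hAC t p).isSubcontinuum
  exact mem_limit_of_tendsto hsub.1.isClosed hsub.2.1
    (fun k => (myArc_spec hAC t (pk k)).isSubcontinuum.2.1) hconv hqk hq

/-- The "tail piece" of an arc from `t` through `c'` to `z`. -/
theorem tail_piece (hAC : ArcwiseConnected X) (hHU : HereditarilyUnicoherent X)
    {t z c' : X} (hc' : c' ∈ myArc hAC t z) :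
    ∃ R : Set X, IsCompact R ∧ IsPreconnected R ∧ R.Nonempty ∧ c' ∈ R ∧ z ∈ R ∧
      ∀ p ∈ R, c' ∈ myArc hAC t p := by
  rcases myArc_spec hAC t z with ⟨rfl, hset⟩ | harc
  · rw [hset] at hc'
    refine ⟨{t}, isCompact_singleton, isPreconnected_singleton, ⟨t, rfl⟩, hc', rfl, ?_⟩
    rintro p rfl
    rw [hc', myArc_self]
    exact rfl
  · obtain ⟨f, hfc, hfi, hfr, hf0, hf1⟩ := harc.exists_param
    rw [← hfr] at hc'
    obtain ⟨s, rfl⟩ := hc'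
    have hsub := (isArcOrPt_image_Icc_one hfc hfi s).isSubcontinuum
    refine ⟨f '' Icc s 1, hsub.1, hsub.2.2, hsub.2.1,
      ⟨s, ⟨le_refl _, unitInterval.le_one'⟩, rfl⟩,
      (by rw [← hf1]; exact ⟨1, ⟨unitInterval.le_one', le_refl _⟩, rfl⟩), ?_⟩
    rintro p ⟨u, ⟨hsu, -⟩, rfl⟩
    rw [myArc_initSeg hAC hHU hfc hfi hf0 u]
    exact ⟨s, ⟨unitInterval.nonneg', hsu⟩, rfl⟩

end MainLemmas
section Central

variable {X : Type*} [MetricSpace X]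

/-- Central lemma: under the hypotheses of Statement 13, a Hausdorff limit of the arcs
`t βⱼ` with `βⱼ → a` equals the arc `t a`, when `a` is the top or an endpoint. -/
theorem limit_eq_arc [CompactSpace X] (hAC : ArcwiseConnected X)
    (hHU : HereditarilyUnicoherent X) {t : X} (hram : ramificationPoints X = {t})
    (hsm : ordinaryPoints X ⊆ smoothSet X t)
    {β : ℕ → X} {a : X} (hβ : Tendsto β atTop (nhds a)) {L : Set X}
    (hLcomp : IsCompact L) (hLne : L.Nonempty)
    (hconv : Tendsto (fun j => hausdorffDist (myArc hAC t (β j)) L) atTop (nhds 0))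
    (hcase : a = t ∨ (a ≠ t ∧ ¬ OrderGe X a 2)) :
    L = myArc hAC t a := by
  have hArspec : ∀ j, IsSubcontinuum (myArc hAC t (β j)) :=
    fun j => (myArc_spec hAC t (β j)).isSubcontinuum
  have hArcomp : ∀ j, IsCompact (myArc hAC t (β j)) := fun j => (hArspec j).1
  have hArne : ∀ j, (myArc hAC t (β j)).Nonempty := fun j => (hArspec j).2.1
  have hArpre : ∀ j, IsPreconnected (myArc hAC t (β j)) := fun j => (hArspec j).2.2
  have hLpre : IsPreconnected L :=
    isPreconnected_limit hArpre hArcomp hArne hLcomp hLne hconv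
  have hLsub : IsSubcontinuum L := ⟨hLcomp, hLne, hLpre⟩
  have htL : t ∈ L :=
    mem_limit_of_tendsto hLcomp.isClosed hLne hArne hconv
      (fun j => mem_myArc_left hAC t (β j)) tendsto_const_nhds
  have haL : a ∈ L :=
    mem_limit_of_tendsto hLcomp.isClosed hLne hArne hconv
      (fun j => mem_myArc_right hAC t (β j)) hβ
  have hBL : myArc hAC t a ⊆ L := arc_subset_subcontinuum hAC hHU hLsub htL haL
  refine subset_antisymm ?_ hBL
  by_contra hnot
  obtain ⟨x, hxL, hxB⟩ := Set.not_subset.mp hnot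
  have hxt : x ≠ t := fun hh => hxB (hh ▸ mem_myArc_left hAC t a)
  have hxarcL : myArc hAC t x ⊆ L := arc_subset_subcontinuum hAC hHU hLsub htL hxL
  -- parametrize the arc t x and take its ordinary midpoint c
  obtain ⟨f, hfc, hfi, hfr, hf0, hf1⟩ := myArc_param hAC hxt
  set c : X := f halfI with hcdef
  have hc_mem : c ∈ myArc hAC t x := by rw [← hfr]; exact mem_range_self _
  have hc_ne_t : c ≠ t := by
    rw [← hf0]
    exact fun hh => halfI_ne_zero (hfi hh)
  have hc_ord : c ∈ ordinaryPoints X :=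
    interior_mem_ordinaryPoints hram hfc hfi hf0 halfI_ne_zero halfI_ne_one
  have hcL : c ∈ L := hxarcL hc_mem
  obtain ⟨ck, hck, hcklim⟩ := tendsto_nearest hArcomp hArne hLne hconv hcL
  rcases hcase with hat | ⟨hat, ha2⟩
  · -- CASE a = t : use the tail pieces of the arcs beyond cₖ
    subst hat
    choose R hRcomp hRpre hRne hckR hβR hRprop using
      fun j => tail_piece hAC hHU (hck j)
    obtain ⟨Q, ψ, hψ, hQconv⟩ := exists_subseq_hausdorff
      (fun j => ⟨⟨R j, hRcomp j⟩, hRne j⟩)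
    have hQconv' : Tendsto (fun i => hausdorffDist (R (ψ i)) (Q : Set X)) atTop (nhds 0) :=
      hQconv
    have hQcomp : IsCompact (Q : Set X) := Q.toCompacts.isCompact
    have hQne : (Q : Set X).Nonempty := Q.nonempty'
    have htQ : a ∈ (Q : Set X) :=
      mem_limit_of_tendsto hQcomp.isClosed hQne (fun i => hRne (ψ i)) hQconv'
        (fun i => hβR (ψ i)) (hβ.comp hψ.tendsto_atTop)
    have hcQ : c ∈ (Q : Set X) :=
      mem_limit_of_tendsto hQcomp.isClosed hQne (fun i => hRne (ψ i)) hQconv'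
        (fun i => hckR (ψ i)) (hcklim.comp hψ.tendsto_atTop)
    have hQpre : IsPreconnected (Q : Set X) :=
      isPreconnected_limit (fun i => hRpre (ψ i)) (fun i => hRcomp (ψ i))
        (fun i => hRne (ψ i)) hQcomp hQne hQconv'
    have harcQ : myArc hAC a c ⊆ (Q : Set X) :=
      arc_subset_subcontinuum hAC hHU ⟨hQcomp, hQne, hQpre⟩ htQ hcQ
    -- the ordinary midpoint p of the arc t c
    obtain ⟨g, hgc, hgi, hgr, hg0, hg1⟩ := myArc_param hAC hc_ne_t
    set p : X := g halfI with hpdef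
    have hp_mem : p ∈ myArc hAC a c := by rw [← hgr]; exact mem_range_self _
    have hp_ord : p ∈ ordinaryPoints X :=
      interior_mem_ordinaryPoints hram hgc hgi hg0 halfI_ne_zero halfI_ne_one
    have hpQ : p ∈ (Q : Set X) := harcQ hp_mem
    obtain ⟨pk, hpk, hpklim⟩ := tendsto_nearest (fun i => hRcomp (ψ i))
      (fun i => hRne (ψ i)) hQne hQconv' hpQ
    have hckp : ∀ i, ck (ψ i) ∈ myArc hAC a (pk i) :=
      fun i => hRprop (ψ i) (pk i) (hpk i)
    have hc_in_p : c ∈ myArc hAC a p :=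
      limit_in_arc hAC hHU (hsm hp_ord) hpklim hckp (hcklim.comp hψ.tendsto_atTop)
    have : c = p := myArc_antisymm hAC hHU hc_in_p hp_mem
    have : g 1 = g halfI := by rw [hg1, ← hpdef, ← this]
    exact halfI_ne_one (hgi this).symm
  · -- CASE a an endpoint
    rcases fan_trichotomy hAC hHU hram x a with hxa | hax | hint
    · exact hxB hxa
    · -- a interior to the arc t x : contradicts ¬ OrderGe a 2
      rw [← hfr] at hax
      obtain ⟨s, hs⟩ := hax
      have hs0 : s ≠ 0 := fun hh => hat (by rw [← hs, hh, hf0])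
      have hs1 : s ≠ 1 := by
        intro hh
        have hxa : x = a := by rw [← hf1, ← hs, hh]
        exact hxB (hxa ▸ mem_myArc_right hAC t a)
      have := interior_mem_ordinaryPoints hram hfc hfi hf0 hs0 hs1
      rw [hs] at this
      exact ha2 this.1
    · -- arcs t x and t a meet only at t
      have hcB : c ∉ myArc hAC t a := by
        intro hcB
        have : c ∈ myArc hAC t x ∩ myArc hAC t a := ⟨hc_mem, hcB⟩
        rw [hint] at this
        exact hc_ne_t this
      obtain ⟨g, hgc, hgi, hgr, hg0, hg1⟩ := myArc_param hAC hat
      set b : X := g halfI with hbdef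
      have hb_mem : b ∈ myArc hAC t a := by rw [← hgr]; exact mem_range_self _
      have hb_ne_t : b ≠ t := by
        rw [← hg0]
        exact fun hh => halfI_ne_zero (hgi hh)
      have hb_ord : b ∈ ordinaryPoints X :=
        interior_mem_ordinaryPoints hram hgc hgi hg0 halfI_ne_zero halfI_ne_one
      have hbL : b ∈ L := hBL hb_mem
      obtain ⟨bk, hbk, hbklim⟩ := tendsto_nearest hArcomp hArne hLne hconv hbL
      have hcompar : ∀ j, ck j ∈ myArc hAC t (bk j) ∨ bk j ∈ myArc hAC t (ck j) :=
        fun j => myArc_comparable hAC hHU (hck j) (hbk j)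
      rcases exists_subseq_or hcompar with ⟨φ, hφ, hφP⟩ | ⟨φ, hφ, hφQ⟩
      · -- ck below bk : c ends up on the arc t b ⊆ arc t a
        have hc_in_b : c ∈ myArc hAC t b :=
          limit_in_arc hAC hHU (hsm hb_ord) (hbklim.comp hφ.tendsto_atTop)
            (fun i => hφP i) (hcklim.comp hφ.tendsto_atTop)
        exact hcB (myArc_subset hAC hHU hb_mem hc_in_b)
      · -- bk below ck : b ends up on the arc t c ⊆ arc t x
        have hb_in_c : b ∈ myArc hAC t c :=
          limit_in_arc hAC hHU (hsm hc_ord) (hcklim.comp hφ.tendsto_atTop)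
            (fun i => hφQ i) (hbklim.comp hφ.tendsto_atTop)
        have : b ∈ myArc hAC t x ∩ myArc hAC t a :=
          ⟨myArc_subset hAC hHU hc_mem hb_in_c, hb_mem⟩
        rw [hint] at this
        exact hb_ne_t this

end Central
/-- If `X` is a fan with `O(X) ⊆ S(X)`, then `X` is smooth. -/
theorem fan_smooth_of_ordinary_subset_smoothSet
    (X : Type*) [MetricSpace X] (t : X)
    (hX : IsFanWithTop X t)
    (h : ordinaryPoints X ⊆ smoothSet X t) :
    IsSmoothFanWithTop X t := by
  obtain ⟨⟨hcomp, hconn, hAC, hHU⟩, hram⟩ := hX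
  haveI : CompactSpace X := hcomp
  refine ⟨⟨⟨hcomp, hconn, hAC, hHU⟩, hram⟩, ?_⟩
  rw [Set.eq_univ_iff_forall]
  intro a
  show SmoothAt X t a
  by_cases hord : a ∈ ordinaryPoints X
  · exact h hord
  have hcase : a = t ∨ (a ≠ t ∧ ¬ OrderGe X a 2) := by
    by_cases hat : a = t
    · exact Or.inl hat
    · refine Or.inr ⟨hat, fun h2 => hord ⟨h2, fun h3 => hat ?_⟩⟩
      have : a ∈ ramificationPoints X := h3
      rwa [hram, mem_singleton_iff] at this
  intro α A B hα hA hB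
  have hAeq : ∀ n, A n = myArc hAC t (α n) := fun n => (hA n).eq_myArc hAC hHU
  have hBeq : B = myArc hAC t a := hB.eq_myArc hAC hHU
  have hgoal : (fun n => hausdorffDist (A n) B) =
      fun n => hausdorffDist (myArc hAC t (α n)) (myArc hAC t a) := by
    funext n; rw [hAeq n, hBeq]
  rw [hgoal]
  apply tendsto_of_subseq_tendsto
  intro ns hns
  obtain ⟨L, φ, hφ, hLconv⟩ := exists_subseq_hausdorff
    (fun j => ⟨⟨myArc hAC t (α (ns j)), (myArc_spec hAC t (α (ns j))).isSubcontinuum.1⟩,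
      (myArc_spec hAC t (α (ns j))).isSubcontinuum.2.1⟩)
  have hLconv' : Tendsto (fun i => hausdorffDist (myArc hAC t (α (ns (φ i)))) (L : Set X))
      atTop (nhds 0) := hLconv
  have hβφ : Tendsto (fun i => α (ns (φ i))) atTop (nhds a) :=
    (hα.comp hns).comp hφ.tendsto_atTop
  have hL : (L : Set X) = myArc hAC t a :=
    limit_eq_arc hAC hHU hram h hβφ L.toCompacts.isCompact L.nonempty' hLconv' hcase
  refine ⟨φ, ?_⟩
  rw [← hL]
  exact hLconv'

end FansHomogeneity
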